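/- Suppose the system Σ is observable and the matrix A ∈ ℂ^{n×n} has n pairwise distinct eigenvalues, with eigenbasis v₁,…,v_n of ℂ^n (A v_j = λ_j v_j, λ_j distinct). Then δ(Σ) = min over j ∈ {1,…,n} of |supp(C v_j)|, where for a vector w ∈ ℂ^N, supp(w) := { i ∈ {1,…,N} : w_i ≠ 0 }. -/

import Mathlib

open Matrix

/-- The behavior of the LTI system Σ = (A, C): all output trajectories
`y(t) = C A^t x₀` for some initial condition `x₀`. -/
def behavior {n N : ℕ} (A : Matrix (Fin n) (Fin n) ℂ) (C : Matrix (Fin N) (Fin n) ℂ) :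
    Set (ℕ → Fin N → ℂ) :=
  { y | ∃ x₀ : Fin n → ℂ, ∀ t, y t = (C * A ^ t).mulVec x₀ }

/-- Observability of Σ = (A, C): the map `x₀ ↦ (C A^t x₀)ₜ` is injective. -/
def Observable {n N : ℕ} (A : Matrix (Fin n) (Fin n) ℂ) (C : Matrix (Fin N) (Fin n) ℂ) : Prop :=
  Function.Injective (fun x₀ : Fin n → ℂ => fun t : ℕ => (C * A ^ t).mulVec x₀)

/-- The weight `‖y‖` of a trajectory: the number of component trajectories
that are not identically zero. -/
noncomputable def weight {N : ℕ} (y : ℕ → Fin N → ℂ) : ℕ :=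
  Set.ncard {i : Fin N | ∃ t, y t i ≠ 0}

/-- The security index `δ(Σ) = min { ‖y‖ : y ∈ B, y ≠ 0 }`. -/
noncomputable def secIndex {n N : ℕ} (A : Matrix (Fin n) (Fin n) ℂ)
    (C : Matrix (Fin N) (Fin n) ℂ) : ℕ :=
  sInf {w : ℕ | ∃ y ∈ behavior A C, y ≠ 0 ∧ w = weight y}

lemma vand_zero {n : ℕ} (lam : Fin n → ℂ) (hlam : Function.Injective lam) (a : Fin n → ℂ)
    (h : ∀ t : ℕ, ∑ j, a j * lam j ^ t = 0) : a = 0 := by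
  have hdet : (Matrix.vandermonde lam).det ≠ 0 :=
    Matrix.det_vandermonde_ne_zero_iff.2 hlam
  have hunit : IsUnit (Matrix.vandermonde lam) :=
    (Matrix.isUnit_iff_isUnit_det _).2 (isUnit_iff_ne_zero.2 hdet)
  have hinj := Matrix.vecMul_injective_iff_isUnit.2 hunit
  have h0 : a ᵥ* Matrix.vandermonde lam = 0 := by
    funext t
    simpa [Matrix.vecMul, dotProduct, Matrix.vandermonde] using h t
  exact hinj (a₁ := a) (a₂ := 0) (by simp [h0])

/-- Theorem 6, particular case: if `A` has `n` pairwise distinct eigenvalues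
with eigenbasis `v_1, …, v_n`, then `δ(Σ) = min_j |supp(C v_j)|`. -/
theorem secIndex_eq_min_eigenvector_support {n N : ℕ}
    (A : Matrix (Fin n) (Fin n) ℂ) (C : Matrix (Fin N) (Fin n) ℂ)
    (hobs : Observable A C)
    (lam : Fin n → ℂ) (hlam : Function.Injective lam)
    (v : Fin n → Fin n → ℂ) (heig : ∀ j, A.mulVec (v j) = lam j • v j)
    (hindep : LinearIndependent ℂ v)
    (hspan : Submodule.span ℂ (Set.range v) = ⊤) :
    secIndex A C =
      sInf {d : ℕ | ∃ j : Fin n, d = Set.ncard {i : Fin N | C.mulVec (v j) i ≠ 0}} := by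
  classical
  have hb : ⊤ ≤ Submodule.span ℂ (Set.range v) := hspan.ge
  let b : Module.Basis (Fin n) ℂ (Fin n → ℂ) := Module.Basis.mk hindep hb
  have hbj : ∀ j, b j = v j := fun j => Module.Basis.mk_apply hindep hb j
  -- eigen powers
  have hpow : ∀ (t : ℕ) (j), (A ^ t).mulVec (v j) = (lam j ^ t) • v j := by
    intro t j
    induction t with
    | zero => simp
    | succ t ih =>
      rw [pow_succ', ← Matrix.mulVec_mulVec, ih, Matrix.mulVec_smul, heig, smul_smul,
        pow_succ, mul_comm]
  -- trajectory formula
  have htraj : ∀ (x₀ : Fin n → ℂ) (t : ℕ) (i : Fin N),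
      (C * A ^ t).mulVec x₀ i = ∑ j, (b.repr x₀ j * C.mulVec (v j) i) * lam j ^ t := by
    intro x₀ t i
    have hx : x₀ = ∑ j, b.repr x₀ j • v j := by
      conv_lhs => rw [← b.sum_repr x₀]
      simp [hbj]
    have hvec : (C * A ^ t).mulVec x₀ = ∑ j, (b.repr x₀ j * lam j ^ t) • C.mulVec (v j) := by
      conv_lhs => rw [hx]
      rw [← Matrix.mulVecLin_apply, map_sum]
      refine Finset.sum_congr rfl fun j _ => ?_
      rw [_root_.map_smul, Matrix.mulVecLin_apply, ← Matrix.mulVec_mulVec, hpow,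
        Matrix.mulVec_smul, smul_smul]
    rw [hvec]
    simp only [Finset.sum_apply, Pi.smul_apply, smul_eq_mul]
    exact Finset.sum_congr rfl fun j _ => by ring
  -- T ⊆ S
  have hTS : {d : ℕ | ∃ j : Fin n, d = Set.ncard {i : Fin N | C.mulVec (v j) i ≠ 0}} ⊆
      {w : ℕ | ∃ y ∈ behavior A C, y ≠ 0 ∧ w = weight y} := by
    rintro d ⟨j, rfl⟩
    refine ⟨fun t => (C * A ^ t).mulVec (v j), ⟨v j, fun t => rfl⟩, ?_, ?_⟩
    · intro hy0
      have hv0 : v j = 0 := hobs (a₁ := v j) (a₂ := 0) (by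
        funext t; simp only [Matrix.mulVec_zero]
        exact congrFun hy0 t)
      exact hindep.ne_zero j hv0
    · have hy : ∀ t i, (C * A ^ t).mulVec (v j) i = lam j ^ t * C.mulVec (v j) i := by
        intro t i
        rw [← Matrix.mulVec_mulVec, hpow, Matrix.mulVec_smul]
        simp
      unfold weight
      congr 1
      symm
      ext i
      simp only [Set.mem_setOf_eq]
      constructor
      · rintro ⟨t, ht⟩
        rw [hy] at ht
        exact right_ne_zero_of_mul ht
      · intro h
        refine ⟨0, ?_⟩
        rw [hy]
        simpa using h
  -- every element of S is bounded below by an element of T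
  have hSl : ∀ w ∈ {w : ℕ | ∃ y ∈ behavior A C, y ≠ 0 ∧ w = weight y},
      ∃ d ∈ {d : ℕ | ∃ j : Fin n, d = Set.ncard {i : Fin N | C.mulVec (v j) i ≠ 0}}, d ≤ w := by
    rintro w ⟨y, ⟨x₀, hy⟩, hy0, rfl⟩
    have hx0 : x₀ ≠ 0 := by
      rintro rfl
      exact hy0 (by funext t i; simp [hy t])
    have hc0 : b.repr x₀ ≠ 0 := by
      intro h
      exact hx0 (by simpa [h] using (b.repr.symm_apply_apply x₀).symm)
    obtain ⟨j, hj⟩ := Finsupp.ne_iff.1 hc0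
    simp only [Finsupp.coe_zero, Pi.zero_apply] at hj
    refine ⟨_, ⟨j, rfl⟩, ?_⟩
    unfold weight
    refine Set.ncard_le_ncard ?_ (Set.toFinite _)
    intro i hi
    simp only [Set.mem_setOf_eq] at hi ⊢
    by_contra hall
    push_neg at hall
    have hsum : ∀ t : ℕ, ∑ k, (b.repr x₀ k * C.mulVec (v k) i) * lam k ^ t = 0 := by
      intro t
      rw [← htraj x₀ t i, ← hy t]
      exact hall t
    have := congrFun (vand_zero lam hlam _ hsum) j
    simp only [Pi.zero_apply, mul_eq_zero] at this
    rcases this with h | h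
    · exact hj h
    · exact hi h
  -- conclude
  unfold secIndex
  apply le_antisymm
  · rcases Set.eq_empty_or_nonempty
      {d : ℕ | ∃ j : Fin n, d = Set.ncard {i : Fin N | C.mulVec (v j) i ≠ 0}} with h | h
    · have hSe : {w : ℕ | ∃ y ∈ behavior A C, y ≠ 0 ∧ w = weight y} = ∅ := by
        rw [Set.eq_empty_iff_forall_notMem]
        intro w hw
        obtain ⟨d, hd, _⟩ := hSl w hw
        rw [h] at hd
        exact hd
      rw [hSe, h]
    · exact Nat.sInf_le (hTS (Nat.sInf_mem h))
  · rcases Set.eq_empty_or_nonempty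
      {w : ℕ | ∃ y ∈ behavior A C, y ≠ 0 ∧ w = weight y} with h | h
    · have hTe : {d : ℕ | ∃ j : Fin n, d = Set.ncard {i : Fin N | C.mulVec (v j) i ≠ 0}} = ∅ :=
        Set.subset_empty_iff.1 (h ▸ hTS)
      rw [h, hTe]
    · obtain ⟨d, hd, hdle⟩ := hSl _ (Nat.sInf_mem h)
      exact le_trans (Nat.sInf_le hd) hdle
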